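/- A (2,n)-semigroup (G; ∘₁,…,∘ₙ) has a faithful representation by partial n-place functions if and only if for all g, x₁,…,xₛ, y₁,…,yₖ ∈ G and all index sequences i₁,…,iₛ, j₁,…,jₖ ∈ {1,…,n}: if μᵢ(∘ᵢ₁…∘ᵢₛ x₁…xₛ) = μᵢ(∘ⱼ₁…∘ⱼₖ y₁…yₖ) for every i = 1,…,n (both sides defined and equal, or both undefined), then g ∘ᵢ₁ x₁ ⋯ ∘ᵢₛ xₛ = g ∘ⱼ₁ y₁ ⋯ ∘ⱼₖ yₖ. -/

import Mathlib

/-- The type of partial `n`-place functions on `A`. -/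
abbrev PFn (n : ℕ) (A : Type) := (Fin n → A) → Option A

/-- The `i`-th Mann composition `f ∘ᵢ g`. -/
def mann {n : ℕ} {A : Type} (i : Fin n) (f g : PFn n A) : PFn n A :=
  fun a => (g a).bind fun b => f (Function.update a i b)

/-- Iterated operations `g ∘ᵢ₁ x₁ ∘ᵢ₂ ⋯ ∘ᵢₛ xₛ` in an abstract `(2,n)`-semigroup. -/
def iterG {n : ℕ} {G : Type} (op : Fin n → G → G → G) (g : G) :
    List (Fin n × G) → G
  | [] => g
  | p :: l => iterG op (op p.1 g p.2) l

/-- `μᵢ(∘ᵢ₁ … ∘ᵢₛ x₁ … xₛ)` in an abstract `(2,n)`-semigroup. -/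
def muG {n : ℕ} {G : Type} (op : Fin n → G → G → G) (i : Fin n) :
    List (Fin n × G) → Option G
  | [] => none
  | p :: l => if p.1 = i then some (iterG op p.2 l) else muG op i l

section Aux

variable {n : ℕ} {G A : Type}

theorem muG_cons (op : Fin n → G → G → G) (i : Fin n) (p : Fin n × G) (l : List (Fin n × G)) :
    muG op i (p :: l) = if p.1 = i then some (iterG op p.2 l) else muG op i l := rfl

theorem iterG_homo (op : Fin n → G → G → G) (P : G → PFn n A)
    (hP : ∀ i x y, P (op i x y) = mann i (P x) (P y)) (g : G) (l : List (Fin n × G)) :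
    P (iterG op g l) = iterG mann (P g) (l.map fun p => (p.1, P p.2)) := by
  induction l generalizing g with
  | nil => rfl
  | cons p l ih => simp only [iterG, List.map_cons, ih, hP]

theorem muG_homo (op : Fin n → G → G → G) (P : G → PFn n A)
    (hP : ∀ i x y, P (op i x y) = mann i (P x) (P y)) (i : Fin n) (l : List (Fin n × G)) :
    muG mann i (l.map fun p => (p.1, P p.2)) = (muG op i l).map P := by
  induction l with
  | nil => rfl
  | cons p l ih =>
    rw [List.map_cons, muG_cons, muG_cons]
    by_cases h : p.1 = i
    · rw [if_pos h, if_pos h, Option.map_some, iterG_homo op P hP]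
    · rw [if_neg h, if_neg h, ih]

/-- The effect of a list of Mann compositions on the argument vector. -/
def evalArgs : List (Fin n × PFn n A) → (Fin n → A) → Option (Fin n → A)
  | [], a => some a
  | p :: l, a => (evalArgs l a).bind fun c => (p.2 c).map fun b => Function.update c p.1 b

theorem iterG_mann_eval (f : PFn n A) (l : List (Fin n × PFn n A)) (a : Fin n → A) :
    iterG mann f l a = (evalArgs l a).bind f := by
  induction l generalizing f with
  | nil => rfl
  | cons p l ih =>
    show iterG mann (mann p.1 f p.2) l a = _
    rw [ih]
    cases hE : evalArgs l a with
    | none => simp [evalArgs, hE]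
    | some c =>
      simp only [evalArgs, hE, Option.bind_some, mann]
      cases p.2 c <;> simp

/-- Auxiliary: the value of the `i`-th component after applying a `μ`-value. -/
def mval : Option (PFn n A) → (Fin n → A) → A → Option A
  | none, _, x => some x
  | some f, a, _ => f a

@[simp] theorem mval_none (a : Fin n → A) (x : A) : mval none a x = some x := rfl

@[simp] theorem mval_some (f : PFn n A) (a : Fin n → A) (x : A) : mval (some f) a x = f a := rfl

/-- The canonical form of `evalArgs` in terms of the `μ`-values only. -/
noncomputable def canon (μ : Fin n → Option (PFn n A)) (a : Fin n → A) :
    Option (Fin n → A) :=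
  if h : ∀ i, (mval (μ i) a (a i)).isSome then
    some (fun i => (mval (μ i) a (a i)).get (h i)) else none

theorem evalArgs_eq_canon (l : List (Fin n × PFn n A)) (a : Fin n → A) :
    evalArgs l a = canon (fun i => muG mann i l) a := by
  induction l with
  | nil =>
    have h : ∀ i : Fin n,
        (mval ((fun i => muG mann i ([] : List (Fin n × PFn n A))) i) a (a i)).isSome :=
      fun _ => rfl
    show some a = canon _ a
    rw [canon, dif_pos h]
    rfl
  | cons p l ih =>
    have key : iterG mann p.2 l a = (evalArgs l a).bind p.2 := iterG_mann_eval _ _ _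
    show (evalArgs l a).bind (fun c => (p.2 c).map fun b => Function.update c p.1 b) =
      canon (fun i => muG mann i (p :: l)) a
    by_cases h : ∀ i, (mval ((fun i => muG mann i l) i) a (a i)).isSome
    · -- evalArgs l a is defined
      have hc : evalArgs l a =
          some (fun i => (mval (muG mann i l) a (a i)).get (h i)) := by
        rw [ih, canon, dif_pos h]
      set c : Fin n → A := fun i => (mval (muG mann i l) a (a i)).get (h i) with hcdef
      have key2 : ∀ i, mval (muG mann i (p :: l)) a (a i) =
          if p.1 = i then p.2 c else mval (muG mann i l) a (a i) := by
        intro i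
        rw [muG_cons]
        by_cases hpi : p.1 = i
        · rw [if_pos hpi, if_pos hpi, mval_some, key, hc, Option.bind_some]
        · rw [if_neg hpi, if_neg hpi]
      rw [hc, Option.bind_some]
      cases hx : p.2 c with
      | none =>
        rw [Option.map_none, canon, dif_neg]
        intro hall
        have h1 := hall p.1
        rw [key2 p.1, if_pos rfl, hx] at h1
        simp at h1
      | some b =>
        have h' : ∀ i, (mval ((fun i => muG mann i (p :: l)) i) a (a i)).isSome := by
          intro i
          rw [key2 i]
          by_cases hpi : p.1 = i
          · rw [if_pos hpi, hx]; rfl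
          · rw [if_neg hpi]; exact h i
        rw [Option.map_some, canon, dif_pos h']
        congr 1
        funext i
        rw [← Option.some_inj, Option.some_get]
        by_cases hpi : p.1 = i
        · subst hpi
          rw [Function.update_self, key2 p.1, if_pos rfl, hx]
        · rw [Function.update_of_ne (Ne.symm hpi), key2 i, if_neg hpi]
          exact (Option.some_get (h i)).symm ▸ rfl
    · -- evalArgs l a = none
      have hc : evalArgs l a = none := by rw [ih, canon, dif_neg h]
      rw [hc, Option.bind_none, canon, dif_neg]
      intro hall
      have h1 := hall p.1
      rw [muG_cons, if_pos rfl, mval_some, key, hc, Option.bind_none] at h1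
      simp at h1

theorem evalArgs_congr (l₁ l₂ : List (Fin n × PFn n A)) (a : Fin n → A)
    (h : ∀ i, muG mann i l₁ = muG mann i l₂) : evalArgs l₁ a = evalArgs l₂ a := by
  rw [evalArgs_eq_canon, evalArgs_eq_canon]
  congr 1
  funext i
  exact h i

open Classical in
/-- The canonical representation used for the converse direction. -/
noncomputable def canonRep (op : Fin n → G → G → G) (g : G) : PFn n (Option G) :=
  fun a =>
    if h : ∃ l : List (Fin n × G), ∀ i, muG op i l = a i
    then some (some (iterG op g h.choose)) else none

end Aux

/-- Theorem 1: a `(2,n)`-semigroup has a faithful representation by partial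
`n`-place functions iff the condition (14) holds. -/
theorem faithful_representation_iff {n : ℕ} {G : Type}
    (op : Fin n → G → G → G)
    (assoc : ∀ i x y z, op i (op i x y) z = op i x (op i y z)) :
    (∃ (A : Type) (P : G → PFn n A), Function.Injective P ∧
        ∀ i x y, P (op i x y) = mann i (P x) (P y)) ↔
      ∀ (g : G) (l₁ l₂ : List (Fin n × G)),
        (∀ i, muG op i l₁ = muG op i l₂) → iterG op g l₁ = iterG op g l₂ := by
  constructor
  · rintro ⟨A, P, hinj, hhom⟩ g l₁ l₂ h
    apply hinj
    rw [iterG_homo op P hhom, iterG_homo op P hhom]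
    funext a
    rw [iterG_mann_eval, iterG_mann_eval]
    rw [evalArgs_congr]
    intro i
    rw [muG_homo op P hhom, muG_homo op P hhom, h i]
  · intro cond
    refine ⟨Option G, canonRep op, ?_, ?_⟩
    · -- injectivity
      intro x y hxy
      have hx := congrFun hxy (fun _ => none)
      have hex : ∃ l : List (Fin n × G), ∀ i, muG op i l = (fun _ => (none : Option G)) i :=
        ⟨[], fun i => rfl⟩
      have hval : ∀ z : G, canonRep op z (fun _ => none) = some (some z) := by
        intro z
        have h0 : iterG op z hex.choose = iterG op z [] :=
          cond z hex.choose [] (fun i => hex.choose_spec i)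
        simp only [canonRep, dif_pos hex, h0]
        rfl
      rw [hval x, hval y] at hx
      exact Option.some_injective _ (Option.some_injective _ hx)
    · -- homomorphism
      intro i x y
      funext a
      by_cases h : ∃ l : List (Fin n × G), ∀ j, muG op j l = a j
      · obtain ⟨l₀, hl₀⟩ := h
        have hex : ∃ l : List (Fin n × G), ∀ j, muG op j l = a j := ⟨l₀, hl₀⟩
        set l₀' := hex.choose with hl₀'def
        have hl₀' : ∀ j, muG op j l₀' = a j := hex.choose_spec
        have hPy : canonRep op y a = some (some (iterG op y l₀')) := by
          simp only [canonRep, dif_pos hex]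
          rfl
        have hPxy : canonRep op (op i x y) a = some (some (iterG op (op i x y) l₀')) := by
          simp only [canonRep, dif_pos hex]
          rfl
        rw [hPxy]
        simp only [mann, hPy, Option.bind_some]
        -- updated argument is realized by (i, y) :: l₀'
        set a' := Function.update a i (some (iterG op y l₀')) with ha'
        have hprof : ∀ j, muG op j ((i, y) :: l₀') = a' j := by
          intro j
          rw [muG_cons]
          by_cases hij : i = j
          · subst hij
            rw [if_pos rfl, ha', Function.update_self]
          · rw [if_neg hij, hl₀' j, ha', Function.update_of_ne (Ne.symm hij)]
        have hex' : ∃ l : List (Fin n × G), ∀ j, muG op j l = a' j :=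
          ⟨(i, y) :: l₀', hprof⟩
        have hPx : canonRep op x a' = some (some (iterG op x hex'.choose)) := by
          simp only [canonRep, dif_pos hex']
        rw [hPx]
        have heq : iterG op x hex'.choose = iterG op x ((i, y) :: l₀') := by
          apply cond
          intro j
          rw [hex'.choose_spec j, hprof j]
        rw [heq]
        rfl
      · have h1 : canonRep op (op i x y) a = none := by
          simp only [canonRep, dif_neg h]
        have h2 : canonRep op y a = none := by
          simp only [canonRep, dif_neg h]
        rw [h1]
        simp [mann, h2]
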